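/- Let A be an invertible real N×N matrix. The polar factor Q of A (the orthogonal matrix in the polar decomposition A = QP with P symmetric positive definite) is the unique minimizer of ‖A − R‖_F over all R ∈ O(N), where ‖·‖_F is the Frobenius norm; moreover if det A > 0 then Q ∈ SO(N) and Q minimizes ‖A − R‖_F over R ∈ SO(N). -/

import Mathlib

open scoped Matrix

attribute [local instance] Matrix.frobeniusNormedAddCommGroup

lemma fro_sq {m n : Type*} [Fintype m] [Fintype n] (X : Matrix m n ℝ) :
    ‖X‖ ^ 2 = Matrix.trace (Xᵀ * X) := by
  rw [Matrix.frobenius_norm_def]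
  rw [← Real.rpow_natCast _ 2, ← Real.rpow_mul (by positivity)]
  norm_num
  rw [Matrix.trace]
  simp [Matrix.diag, Matrix.mul_apply, Matrix.transpose_apply, sq]
  rw [Finset.sum_comm]

lemma trace_expand {n : Type*} [Fintype n] (X Y : Matrix n n ℝ) :
    Matrix.trace ((X - Y)ᵀ * (X - Y)) =
      Matrix.trace (Xᵀ * X) - 2 * Matrix.trace (Yᵀ * X) + Matrix.trace (Yᵀ * Y) := by
  have h : Matrix.trace (Xᵀ * Y) = Matrix.trace (Yᵀ * X) := by
    rw [← Matrix.trace_transpose (Xᵀ * Y), Matrix.transpose_mul, Matrix.transpose_transpose]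
  simp only [Matrix.transpose_sub, Matrix.sub_mul, Matrix.mul_sub, Matrix.trace_sub]
  rw [h]; ring

theorem polar_factor_closest_orthogonal
    {N : ℕ} (A Q P : Matrix (Fin N) (Fin N) ℝ)
    (hA : IsUnit A.det)
    (hQ : Q ∈ Matrix.orthogonalGroup (Fin N) ℝ)
    (hP : P.PosDef)
    (hQP : A = Q * P) :
    (∀ R ∈ Matrix.orthogonalGroup (Fin N) ℝ, R ≠ Q → ‖A - Q‖ < ‖A - R‖) ∧
    (0 < A.det → Q.det = 1 ∧
      ∀ R ∈ Matrix.orthogonalGroup (Fin N) ℝ, R.det = 1 → ‖A - Q‖ ≤ ‖A - R‖) := by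
  classical
  have hQ1 : Qᵀ * Q = 1 := by
    have := (Matrix.mem_orthogonalGroup_iff' (Fin N) ℝ).mp hQ
    exact this
  have hPsym : Pᵀ = P := by
    have := hP.1
    rwa [Matrix.IsHermitian, Matrix.conjTranspose_eq_transpose_of_trivial] at this
  obtain ⟨B, hBsym, hBB⟩ :
      ∃ B : Matrix (Fin N) (Fin N) ℝ, Bᵀ = B ∧ B * B = P := by
    open scoped MatrixOrder in
    refine ⟨CFC.sqrt P, ?_, CFC.sqrt_mul_sqrt_self P hP.posSemidef.nonneg⟩
    open scoped MatrixOrder in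
    have := (CFC.sqrt_nonneg P).isSelfAdjoint
    rwa [IsSelfAdjoint, Matrix.star_eq_conjTranspose, Matrix.conjTranspose_eq_transpose_of_trivial] at this
  have hBdet : IsUnit B.det := by
    have hPdet : 0 < P.det := hP.det_pos
    rw [← hBB, Matrix.det_mul] at hPdet
    exact isUnit_iff_ne_zero.mpr (fun h => by rw [h, mul_zero] at hPdet; exact lt_irrefl 0 hPdet)
  -- key identity
  have key : ∀ R : Matrix (Fin N) (Fin N) ℝ, Rᵀ * R = 1 →
      ‖A - R‖ ^ 2 = ‖A - Q‖ ^ 2 + ‖B - (Rᵀ * Q) * B‖ ^ 2 := by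
    intro R hR1
    have hR1' : R * Rᵀ = 1 := mul_eq_one_comm.mp hR1
    set S : Matrix (Fin N) (Fin N) ℝ := Rᵀ * Q with hS
    have hSS : Sᵀ * S = 1 := by
      rw [hS, Matrix.transpose_mul, Matrix.transpose_transpose]
      calc Qᵀ * R * (Rᵀ * Q) = Qᵀ * (R * Rᵀ) * Q := by noncomm_ring
        _ = 1 := by rw [hR1', Matrix.mul_one, hQ1]
    rw [fro_sq, fro_sq, fro_sq, trace_expand, trace_expand, trace_expand]
    have h1 : Matrix.trace (Rᵀ * A) = Matrix.trace (S * P) := by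
      rw [hQP, ← Matrix.mul_assoc]
    have h2 : Matrix.trace (Qᵀ * A) = Matrix.trace P := by
      rw [hQP, ← Matrix.mul_assoc, hQ1, Matrix.one_mul]
    have h3 : Matrix.trace (Rᵀ * R) = Matrix.trace (Qᵀ * Q) := by rw [hR1, hQ1]
    have h4 : Matrix.trace ((S * B)ᵀ * (S * B)) = Matrix.trace P := by
      rw [Matrix.transpose_mul, Matrix.mul_assoc, ← Matrix.mul_assoc Sᵀ S B, hSS,
        Matrix.one_mul, hBsym, hBB]
    have h5 : Matrix.trace ((S * B)ᵀ * B) = Matrix.trace (S * P) := by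
      rw [Matrix.transpose_mul, hBsym, Matrix.trace_mul_comm (B * Sᵀ) B, ← Matrix.mul_assoc,
        hBB]
      rw [← Matrix.trace_transpose (P * Sᵀ), Matrix.transpose_mul, Matrix.transpose_transpose,
        hPsym]
    have h6 : Matrix.trace (Bᵀ * B) = Matrix.trace P := by rw [hBsym, hBB]
    rw [h1, h2, h3, h4, h5, h6]
    ring
  have part1 : ∀ R ∈ Matrix.orthogonalGroup (Fin N) ℝ, R ≠ Q → ‖A - Q‖ < ‖A - R‖ := by
    intro R hR hne
    have hR1 : Rᵀ * R = 1 := by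
      have := (Matrix.mem_orthogonalGroup_iff' (Fin N) ℝ).mp hR
      exact this
    have hkey := key R hR1
    have hne' : B - (Rᵀ * Q) * B ≠ 0 := by
      intro h0
      have hSB : (Rᵀ * Q) * B = B := by
        have := sub_eq_zero.mp h0
        exact this.symm
      have hS1 : Rᵀ * Q = 1 := by
        have := congrArg (fun M => M * B⁻¹) hSB
        simpa [Matrix.mul_assoc, Matrix.mul_nonsing_inv B hBdet] using this
      have hQR : Q = R := by
        have hRR : R * Rᵀ = 1 := mul_eq_one_comm.mp hR1
        have := congrArg (fun M => R * M) hS1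
        simpa [← Matrix.mul_assoc, hRR] using this
      exact hne hQR.symm
    have hpos : 0 < ‖B - (Rᵀ * Q) * B‖ ^ 2 := pow_pos (norm_pos_iff.mpr hne') 2
    have hlt : ‖A - Q‖ ^ 2 < ‖A - R‖ ^ 2 := by rw [hkey]; linarith
    exact lt_of_pow_lt_pow_left₀ 2 (norm_nonneg _) hlt
  refine ⟨part1, fun hdet => ?_⟩
  have hQdet : Q.det = 1 := by
    have h1 : Q.det * Q.det = 1 := by
      have := congrArg Matrix.det hQ1
      rwa [Matrix.det_mul, Matrix.det_transpose, Matrix.det_one] at this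
    have h2 : 0 < Q.det := by
      have hPdet : 0 < P.det := hP.det_pos
      rw [hQP, Matrix.det_mul] at hdet
      nlinarith
    rcases mul_self_eq_one_iff.mp h1 with h | h
    · exact h
    · linarith [h2, h ▸ h2]
  refine ⟨hQdet, fun R hR _ => ?_⟩
  by_cases h : R = Q
  · rw [h]
  · exact le_of_lt (part1 R hR h)
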